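/- arXiv:2507.03725 — 2 statements merged into one kernel-verified Lean document; each statement's English description precedes it below -/
import Mathlib

section
/- Let psi: N -> [0, infinity) be increasing with psi(0) = 0 and suppose psi(n) = O(n^z) for some z > 0, and suppose psi(n) = Omega(n^{l/4}) and psi(n) = o(n^{(l+1)/4}) for some nonnegative integer l. Fix a proportion and set Q = Q(n) <= n. Then the Lyapunov condition of order delta = 2 holds for the independent random variables W_1,...,W_{n-Q} where W_j = ± psi(j) with probability 1/2 each: (sum_{j=1}^{n-Q} psi(j)^4) / (sum_{j=1}^{n-Q} psi(j)^2)^2 -> 0 as n -> infinity, provided n - Q -> infinity. -/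
open Finset Filter Asymptotics

/-- Lyapunov condition of order `δ = 2` for the symmetric two-point variables
`W_j = ±ψ(j)`: if `ψ` is nonnegative increasing with `ψ(0) = 0`, grows polynomially,
is `Ω(n^{l/4})` and `o(n^{(l+1)/4})` for some `l : ℕ`, and `n − Q(n) → ∞` with
`Q(n) ≤ n`, then `(∑_{j=1}^{n−Q} ψ(j)⁴) / (∑_{j=1}^{n−Q} ψ(j)²)² → 0`. -/
theorem lyapunov_condition_signed_rank (ψ : ℕ → ℝ) (hmono : Monotone ψ)
    (hnonneg : ∀ m, 0 ≤ ψ m) (hzero : ψ 0 = 0)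
    (hO : ∃ z : ℝ, 0 < z ∧ (fun m : ℕ => ψ m) =O[atTop] fun m : ℕ => (m : ℝ) ^ z)
    (l : ℕ)
    (hΩ : (fun m : ℕ => (m : ℝ) ^ ((l : ℝ) / 4)) =O[atTop] fun m : ℕ => ψ m)
    (ho : (fun m : ℕ => ψ m) =o[atTop] fun m : ℕ => (m : ℝ) ^ (((l : ℝ) + 1) / 4))
    (Q : ℕ → ℕ) (hQ : ∀ n, Q n ≤ n)
    (hgrow : Tendsto (fun n => n - Q n) atTop atTop) :
    Tendsto (fun n : ℕ =>
      (∑ j ∈ Finset.Icc 1 (n - Q n), ψ j ^ 4) /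
        (∑ j ∈ Finset.Icc 1 (n - Q n), ψ j ^ 2) ^ 2) atTop (nhds 0) := by
  obtain ⟨C, hC, hCbd⟩ := hΩ.exists_pos
  rw [Asymptotics.isBigOWith_iff] at hCbd
  obtain ⟨M, hM⟩ := Filter.eventually_atTop.mp hCbd
  set K : ℝ := 4 * 3 ^ l * C ^ 4 with hKdef
  have hKpos : 0 < K := by positivity
  have hg : Tendsto (fun m : ℕ => ψ m / (m : ℝ) ^ (((l : ℝ) + 1) / 4)) atTop (nhds 0) :=
    ho.tendsto_div_nhds_zero
  have hKlim : Tendsto (fun m : ℕ => K * (ψ m / (m : ℝ) ^ (((l : ℝ) + 1) / 4)) ^ 4)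
      atTop (nhds 0) := by
    have := (hg.pow 4).const_mul K
    simpa using this
  have main : Tendsto (fun m : ℕ =>
      (∑ j ∈ Finset.Icc 1 m, ψ j ^ 4) / (∑ j ∈ Finset.Icc 1 m, ψ j ^ 2) ^ 2)
      atTop (nhds 0) := by
    apply squeeze_zero' ?_ ?_ hKlim
    · filter_upwards with m
      have h1 : 0 ≤ ∑ j ∈ Finset.Icc 1 m, ψ j ^ 4 :=
        Finset.sum_nonneg fun j _ => by positivity
      positivity
    · filter_upwards [eventually_ge_atTop (2 * M + 6)] with m hm
      set k := m / 2 with hk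
      have hm6 : 6 ≤ m := by omega
      have hkM : M ≤ k := by omega
      have hk1 : 1 ≤ k := by omega
      have hkm : k ≤ m := by omega
      have hmpos : (0 : ℝ) < m := by
        have : 0 < m := by omega
        exact_mod_cast this
      have hkpos : (0 : ℝ) < k := by exact_mod_cast hk1
      have hk3 : (m : ℝ) / 3 ≤ (k : ℝ) := by
        have h : m ≤ 3 * k := by omega
        have := (Nat.cast_le (α := ℝ)).mpr h
        push_cast at this
        linarith
      have hcard2 : (m : ℝ) / 2 ≤ ((Finset.Icc k m).card : ℝ) := by
        rw [Nat.card_Icc]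
        have h : m ≤ 2 * (m + 1 - k) := by omega
        have := (Nat.cast_le (α := ℝ)).mpr h
        push_cast [Nat.cast_sub (by omega : k ≤ m + 1)] at this ⊢
        linarith
      -- bound at k
      have hMk := hM k hkM
      rw [Real.norm_eq_abs, Real.norm_eq_abs, abs_of_nonneg (by positivity),
        abs_of_nonneg (hnonneg k)] at hMk
      have hψkpos : 0 < ψ k := by
        have h0 : (0 : ℝ) < (k : ℝ) ^ ((l : ℝ) / 4) := Real.rpow_pos_of_pos hkpos _
        nlinarith
      have hψk4 : ((m : ℝ) / 3) ^ l ≤ C ^ 4 * ψ k ^ 4 := by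
        have h4 : ((k : ℝ) ^ ((l : ℝ) / 4)) ^ 4 ≤ (C * ψ k) ^ 4 :=
          pow_le_pow_left₀ (by positivity) hMk 4
        have hL : ((k : ℝ) ^ ((l : ℝ) / 4)) ^ 4 = (k : ℝ) ^ l := by
          rw [← Real.rpow_natCast ((k : ℝ) ^ ((l : ℝ) / 4)) 4,
            ← Real.rpow_mul (Nat.cast_nonneg k)]
          norm_num
        have hbase : ((m : ℝ) / 3) ^ l ≤ (k : ℝ) ^ l :=
          pow_le_pow_left₀ (by positivity) hk3 l
        calc ((m : ℝ) / 3) ^ l ≤ (k : ℝ) ^ l := hbase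
          _ = ((k : ℝ) ^ ((l : ℝ) / 4)) ^ 4 := hL.symm
          _ ≤ (C * ψ k) ^ 4 := h4
          _ = C ^ 4 * ψ k ^ 4 := by ring
      -- lower bound for S2
      have hS2low : (m : ℝ) / 2 * ψ k ^ 2 ≤ ∑ j ∈ Finset.Icc 1 m, ψ j ^ 2 := by
        have h1 : ((Finset.Icc k m).card : ℝ) * ψ k ^ 2 ≤ ∑ j ∈ Finset.Icc k m, ψ j ^ 2 := by
          have := Finset.card_nsmul_le_sum (Finset.Icc k m) (fun j => ψ j ^ 2) (ψ k ^ 2)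
            (fun j hj => by
              have hkj : k ≤ j := (Finset.mem_Icc.mp hj).1
              exact pow_le_pow_left₀ (hnonneg k) (hmono hkj) 2)
          simpa [nsmul_eq_mul] using this
        have h2 : ∑ j ∈ Finset.Icc k m, ψ j ^ 2 ≤ ∑ j ∈ Finset.Icc 1 m, ψ j ^ 2 :=
          Finset.sum_le_sum_of_subset_of_nonneg
            (Finset.Icc_subset_Icc_left hk1) (fun j _ _ => by positivity)
        have h0 : (m : ℝ) / 2 * ψ k ^ 2 ≤ ((Finset.Icc k m).card : ℝ) * ψ k ^ 2 :=
          mul_le_mul_of_nonneg_right hcard2 (by positivity)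
        linarith
      have hS2pos : 0 < ∑ j ∈ Finset.Icc 1 m, ψ j ^ 2 := by
        have h0 : 0 < (m : ℝ) / 2 * ψ k ^ 2 := by positivity
        linarith
      -- upper bound for S4
      have hS4up : ∑ j ∈ Finset.Icc 1 m, ψ j ^ 4 ≤ (m : ℝ) * ψ m ^ 4 := by
        have := Finset.sum_le_card_nsmul (Finset.Icc 1 m) (fun j => ψ j ^ 4) (ψ m ^ 4)
          (fun j hj => by
            have hjm : j ≤ m := (Finset.mem_Icc.mp hj).2
            exact pow_le_pow_left₀ (hnonneg j) (hmono hjm) 4)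
        simpa [nsmul_eq_mul, Nat.card_Icc] using this
      -- rewrite RHS
      have hX : ((m : ℝ) ^ (((l : ℝ) + 1) / 4)) ^ 4 = (m : ℝ) ^ (l + 1) := by
        rw [← Real.rpow_natCast ((m : ℝ) ^ (((l : ℝ) + 1) / 4)) 4,
          ← Real.rpow_mul hmpos.le]
        norm_num
        rw [show ((l : ℝ) + 1) = ((l + 1 : ℕ) : ℝ) by push_cast; ring,
          Real.rpow_natCast]
      have hRHS : K * (ψ m / (m : ℝ) ^ (((l : ℝ) + 1) / 4)) ^ 4
          = K * ψ m ^ 4 / (m : ℝ) ^ (l + 1) := by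
        rw [div_pow, hX]; ring
      rw [hRHS, div_le_div_iff₀ (by positivity) (by positivity)]
      -- main estimate
      have key : (m : ℝ) * ψ m ^ 4 * (m : ℝ) ^ (l + 1)
          = 4 * 3 ^ l * ψ m ^ 4 * ((m : ℝ) / 2) ^ 2 * ((m : ℝ) / 3) ^ l := by
        simp only [div_pow]
        field_simp
        ring
      calc (∑ j ∈ Finset.Icc 1 m, ψ j ^ 4) * (m : ℝ) ^ (l + 1)
          ≤ (m : ℝ) * ψ m ^ 4 * (m : ℝ) ^ (l + 1) :=
            mul_le_mul_of_nonneg_right hS4up (by positivity)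
        _ = 4 * 3 ^ l * ψ m ^ 4 * ((m : ℝ) / 2) ^ 2 * ((m : ℝ) / 3) ^ l := key
        _ ≤ 4 * 3 ^ l * ψ m ^ 4 * ((m : ℝ) / 2) ^ 2 * (C ^ 4 * ψ k ^ 4) :=
            mul_le_mul_of_nonneg_left hψk4 (by positivity)
        _ = K * ψ m ^ 4 * ((m : ℝ) / 2 * ψ k ^ 2) ^ 2 := by rw [hKdef]; ring
        _ ≤ K * ψ m ^ 4 * (∑ j ∈ Finset.Icc 1 m, ψ j ^ 2) ^ 2 :=
            mul_le_mul_of_nonneg_left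
              (pow_le_pow_left₀ (by positivity) hS2low 2) (by positivity)
  exact main.comp hgrow
end

section
/- Let T: D_n -> R be a statistic on databases of size n with finite global sensitivity GS(T) = sup over adjacent databases of |T(y) - T(z)|. If Z has a standard Laplace distribution (density (1/2) exp(-|t|)), then the randomized output T(x) + (GS(T)/epsilon) * Z is epsilon-differentially private: for all adjacent databases y, z and all measurable sets S, P(T(y) + (GS(T)/epsilon) Z in S) <= e^{epsilon} * P(T(z) + (GS(T)/epsilon) Z in S). -/
open MeasureTheory
open scoped ENNReal

/-- Two databases of size `n` are adjacent if they differ in exactly one entry. -/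
def AdjacentDB {n : ℕ} (y z : Fin n → ℝ) : Prop :=
  ∃ i : Fin n, y i ≠ z i ∧ ∀ j : Fin n, j ≠ i → y j = z j

/-- The Laplace mechanism: if `T` has global sensitivity at most `Δ > 0` over adjacent
databases, and `Z` is a standard Laplace random variable (density `½ e^{−|t|}`), then
`T(x) + (Δ/ε) Z` is `ε`-differentially private. -/
theorem laplace_mechanism_dp {n : ℕ} (T : (Fin n → ℝ) → ℝ) (Δ ε : ℝ)
    (hΔ : 0 < Δ) (hε : 0 < ε)
    (hsens : ∀ y z : Fin n → ℝ, AdjacentDB y z → |T y - T z| ≤ Δ)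
    {Ω : Type*} [MeasureSpace Ω] (μ : Measure Ω) [IsProbabilityMeasure μ]
    (Z : Ω → ℝ) (hZmeas : Measurable Z)
    (hZlaw : μ.map Z =
      MeasureTheory.volume.withDensity fun t => ENNReal.ofReal ((1 / 2) * Real.exp (-|t|))) :
    ∀ y z : Fin n → ℝ, AdjacentDB y z → ∀ S : Set ℝ, MeasurableSet S →
      μ {ω | T y + (Δ / ε) * Z ω ∈ S}
        ≤ ENNReal.ofReal (Real.exp ε) * μ {ω | T z + (Δ / ε) * Z ω ∈ S} := by
  intro y z hadj S hS
  set c : ℝ := Δ / ε with hc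
  have hcpos : 0 < c := div_pos hΔ hε
  set s : ℝ := (T y - T z) / c with hsdef
  have hsle : |s| ≤ ε := by
    rw [hsdef, abs_div, abs_of_pos hcpos, div_le_iff₀ hcpos]
    calc |T y - T z| ≤ Δ := hsens y z hadj
      _ = ε * c := by rw [hc]; field_simp
  set g : ℝ → ℝ≥0∞ := fun t => ENNReal.ofReal ((1 / 2) * Real.exp (-|t|)) with hg
  have hgmeas : Measurable g := by
    apply Measurable.ennreal_ofReal
    fun_prop
  set A : Set ℝ := (fun t => T y + c * t) ⁻¹' S with hA
  set B : Set ℝ := (fun t => T z + c * t) ⁻¹' S with hB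
  have hAmeas : MeasurableSet A := (measurable_const.add (measurable_id.const_mul c)) hS
  have hBmeas : MeasurableSet B := (measurable_const.add (measurable_id.const_mul c)) hS
  have hμA : μ {ω | T y + c * Z ω ∈ S} = (μ.map Z) A := by
    rw [Measure.map_apply hZmeas hAmeas]; rfl
  have hμB : μ {ω | T z + c * Z ω ∈ S} = (μ.map Z) B := by
    rw [Measure.map_apply hZmeas hBmeas]; rfl
  rw [hμA, hμB, hZlaw, withDensity_apply _ hAmeas, withDensity_apply _ hBmeas]
  -- A = (·+s) ⁻¹' B
  have hAB : A = (fun t => t + s) ⁻¹' B := by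
    ext t
    simp only [hA, hB, Set.mem_preimage]
    have : T z + c * (t + s) = T y + c * t := by
      rw [hsdef]; field_simp; ring
    rw [this]
  have hmap : Measure.map (fun t : ℝ => t + s) volume = volume :=
    map_add_right_eq_self volume s
  have key : ∫⁻ t in A, g t = ∫⁻ t in B, g (t - s) := by
    rw [hAB]
    have := MeasureTheory.setLIntegral_map (μ := volume) hBmeas
      (f := fun t : ℝ => g (t - s)) (g := fun t : ℝ => t + s)
      (by fun_prop) (measurable_id.add_const s)
    rw [hmap] at this
    simp only [add_sub_cancel_right] at this
    exact this.symm
  rw [key, ← lintegral_const_mul _ hgmeas]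
  apply lintegral_mono
  intro t
  rw [hg]
  simp only
  rw [← ENNReal.ofReal_mul (Real.exp_nonneg ε)]
  apply ENNReal.ofReal_le_ofReal
  rw [show Real.exp ε * ((1:ℝ)/2 * Real.exp (-|t|)) = (1/2) * (Real.exp ε * Real.exp (-|t|)) by ring,
    ← Real.exp_add]
  apply mul_le_mul_of_nonneg_left _ (by norm_num)
  apply Real.exp_le_exp.mpr
  have h1 : |t| - |t - s| ≤ |s| := by
    have := abs_sub_abs_le_abs_sub t (t - s)
    simpa using this
  linarith
end
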